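/- arXiv:2602.08069 — 4 statements merged into one kernel-verified Lean document; each statement's English description precedes it below -/
import Mathlib

section
/- Let f: H → ℝ be Fréchet differentiable with (L/2)-Lipschitz derivative, A: H → H* a bounded linear self-adjoint operator with ‖A‖_op ≤ L/2, x ∈ H and λ ≥ L. If x₊ ∈ H satisfies the optimality condition of the regularized quadratic model, i.e., F'(x₊) := f'(x₊) − f'(x) − A(x₊ − x) − λ R(x₊ − x), where R is the Riesz map, then ⟨F'(x₊), x − x₊⟩ ≥ (1/(2λ))‖F'(x₊)‖_*^2. -/
theorem first_acceptance_condition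
    {H : Type*} [NormedAddCommGroup H] [InnerProductSpace ℝ H]
    [CompleteSpace H]
    (L lam : ℝ) (hL : 0 < L) (hlam : L ≤ lam)
    (f : H → ℝ) (f' : H → (H →L[ℝ] ℝ))
    (hdiff : ∀ u : H, HasFDerivAt f (f' u) u)
    (hlip : ∀ u v : H, ‖f' u - f' v‖ ≤ L / 2 * ‖u - v‖)
    (A : H →L[ℝ] (H →L[ℝ] ℝ)) (hA : ‖A‖ ≤ L / 2)
    (hAsym : ∀ u v : H, A u v = A v u)
    (x xplus : H) (Fp : H →L[ℝ] ℝ)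
    (hFp : Fp = f' xplus - f' x - A (xplus - x)
      - lam • (InnerProductSpace.toDual ℝ H (xplus - x) : H →L[ℝ] ℝ)) :
    Fp (x - xplus) ≥ 1 / (2 * lam) * ‖Fp‖ ^ 2 := by
  have hlam0 : 0 < lam := lt_of_lt_of_le hL hlam
  set d : H := xplus - x with hd
  set G : H →L[ℝ] ℝ := f' xplus - f' x - A d with hG
  set g : H := (InnerProductSpace.toDual ℝ H).symm G with hg
  have htd : (InnerProductSpace.toDual ℝ H) g = G := by
    simp [hg]
  have hgG : ∀ w : H, inner ℝ g w = G w := by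
    intro w
    rw [← htd]
    simp [InnerProductSpace.toDual_apply_apply]
  have hgnorm : ‖g‖ ≤ L * ‖d‖ := by
    have h1 : ‖g‖ = ‖G‖ := (InnerProductSpace.toDual ℝ H).symm.norm_map G
    have h2 : ‖f' xplus - f' x‖ ≤ L / 2 * ‖d‖ := by simpa [hd] using hlip xplus x
    have h3 : ‖A d‖ ≤ L / 2 * ‖d‖ := by
      calc ‖A d‖ ≤ ‖A‖ * ‖d‖ := A.le_opNorm d
        _ ≤ L / 2 * ‖d‖ := mul_le_mul_of_nonneg_right hA (norm_nonneg d)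
    have h4 : ‖G‖ ≤ ‖f' xplus - f' x‖ + ‖A d‖ := norm_sub_le _ _
    linarith
  have hFp' : Fp = (InnerProductSpace.toDual ℝ H) (g - lam • d) := by
    rw [hFp]
    ext w
    have := hgG w
    simp only [ContinuousLinearMap.sub_apply, ContinuousLinearMap.smul_apply,
      InnerProductSpace.toDual_apply_apply, map_sub, inner_sub_left, inner_smul_left,
      RCLike.conj_to_real, smul_eq_mul]
    rw [hgG w]
  have hFnorm : ‖Fp‖ = ‖g - lam • d‖ := by
    rw [hFp']; exact (InnerProductSpace.toDual ℝ H).norm_map _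
  have hval : Fp (x - xplus) = lam * ‖d‖ ^ 2 - inner ℝ g d := by
    have hxd : x - xplus = -d := by simp [hd]
    rw [hFp', hxd]
    simp only [InnerProductSpace.toDual_apply_apply, inner_neg_right, inner_sub_left,
      inner_smul_left, RCLike.conj_to_real, real_inner_self_eq_norm_sq]
    ring
  have hexp : ‖g - lam • d‖ ^ 2 = ‖g‖ ^ 2 - 2 * (lam * inner ℝ g d) + lam ^ 2 * ‖d‖ ^ 2 := by
    rw [norm_sub_sq_real]
    rw [real_inner_smul_right, norm_smul, Real.norm_eq_abs, abs_of_pos hlam0]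
    ring
  clear_value d G g
  rw [hval, hFnorm, hexp]
  have hsq : ‖g‖ ^ 2 ≤ lam ^ 2 * ‖d‖ ^ 2 := by
    have h1 : ‖g‖ ≤ lam * ‖d‖ :=
      le_trans hgnorm (mul_le_mul_of_nonneg_right hlam (norm_nonneg d))
    nlinarith [norm_nonneg g, norm_nonneg d]
  have key : lam * ‖d‖ ^ 2 - inner ℝ g d -
      1 / (2 * lam) * (‖g‖ ^ 2 - 2 * (lam * inner ℝ g d) + lam ^ 2 * ‖d‖ ^ 2)
      = 1 / (2 * lam) * (lam ^ 2 * ‖d‖ ^ 2 - ‖g‖ ^ 2) := by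
    field_simp
    ring
  have hpos : 0 ≤ 1 / (2 * lam) * (lam ^ 2 * ‖d‖ ^ 2 - ‖g‖ ^ 2) := by
    apply mul_nonneg
    · positivity
    · linarith
  linarith
end

section
/- Let f: H → ℝ have (L/2)-Lipschitz Fréchet derivative, ψ: H → ℝ ∪ {+∞} be proper convex lower semicontinuous, A self-adjoint with ‖A‖_op ≤ L/2, λ ≥ L, and let x₊ be a minimizer over H of y ↦ ⟨f'(x), y−x⟩ + (1/2)⟨A(y−x), y−x⟩ + (λ/2)‖y−x‖² + ψ(y). Then F(x) − F(x₊) ≥ (λ/4)‖x₊ − x‖², where F = f + ψ. -/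
lemma descent_aux {H : Type*} [NormedAddCommGroup H] [InnerProductSpace ℝ H]
    (L : ℝ) (hL : 0 ≤ L) (f : H → ℝ) (f' : H → (H →L[ℝ] ℝ))
    (hdiff : ∀ u, HasFDerivAt f (f' u) u)
    (hlip : ∀ u v, ‖f' u - f' v‖ ≤ L / 2 * ‖u - v‖)
    (x y : H) :
    f y ≤ f x + f' x (y - x) + L / 4 * ‖y - x‖ ^ 2 := by
  set s := y - x with hs
  have hg : ∀ t : ℝ, HasDerivAt (fun t : ℝ => f (x + t • s)) (f' (x + t • s) s) t := by
    intro t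
    have h1 : HasDerivAt (fun t : ℝ => x + t • s) s t := by
      simpa using ((hasDerivAt_id t).smul_const s).const_add x
    exact (hdiff _).comp_hasDerivAt t h1
  have hcontf' : Continuous f' := by
    have : LipschitzWith (L / 2).toNNReal f' := by
      apply LipschitzWith.of_dist_le_mul
      intro u v
      rw [dist_eq_norm, dist_eq_norm]
      simpa [Real.coe_toNNReal _ (by linarith : (0:ℝ) ≤ L / 2)] using hlip u v
    exact this.continuous
  have hcontint : Continuous (fun t : ℝ => f' (x + t • s) s) := by
    have h1 : Continuous (fun t : ℝ => x + t • s) := by continuity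
    exact (ContinuousLinearMap.apply ℝ ℝ s).continuous.comp (hcontf'.comp h1)
  have hFTC : ∫ t in (0:ℝ)..1, f' (x + t • s) s = f y - f x := by
    have := intervalIntegral.integral_eq_sub_of_hasDerivAt
      (f := fun t : ℝ => f (x + t • s)) (fun t _ => hg t)
      (hcontint.intervalIntegrable 0 1)
    simpa [hs] using this
  have hmono : ∫ t in (0:ℝ)..1, f' (x + t • s) s
      ≤ ∫ t in (0:ℝ)..1, (f' x s + L / 2 * ‖s‖ ^ 2 * t) := by
    apply intervalIntegral.integral_mono_on (by norm_num) (hcontint.intervalIntegrable 0 1)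
    · exact (by continuity : Continuous fun t : ℝ => f' x s + L / 2 * ‖s‖ ^ 2 * t).intervalIntegrable 0 1
    · intro t ht
      have h1 : f' (x + t • s) s - f' x s ≤ ‖f' (x + t • s) - f' x‖ * ‖s‖ := by
        calc f' (x + t • s) s - f' x s = (f' (x + t • s) - f' x) s := by simp
        _ ≤ ‖(f' (x + t • s) - f' x) s‖ := le_abs_self _
        _ ≤ ‖f' (x + t • s) - f' x‖ * ‖s‖ := (f' (x + t • s) - f' x).le_opNorm s
      have h2 : ‖f' (x + t • s) - f' x‖ ≤ L / 2 * (t * ‖s‖) := by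
        have := hlip (x + t • s) x
        simpa [norm_smul, abs_of_nonneg ht.1] using this
      have h3 : ‖f' (x + t • s) - f' x‖ * ‖s‖ ≤ L / 2 * (t * ‖s‖) * ‖s‖ :=
        mul_le_mul_of_nonneg_right h2 (norm_nonneg s)
      nlinarith [norm_nonneg s]
  have hval : ∫ t in (0:ℝ)..1, (f' x s + L / 2 * ‖s‖ ^ 2 * t)
      = f' x s + L / 4 * ‖s‖ ^ 2 := by
    rw [intervalIntegral.integral_add (intervalIntegrable_const)
        ((by continuity : Continuous fun t : ℝ => L / 2 * ‖s‖ ^ 2 * t).intervalIntegrable 0 1),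
      intervalIntegral.integral_const, intervalIntegral.integral_const_mul, integral_id]
    simp; ring
  linarith [hFTC ▸ hmono, hval ▸ hmono]

open InnerProductSpace

theorem sufficient_decrease_of_model_minimizer
    {H : Type*} [NormedAddCommGroup H] [InnerProductSpace ℝ H]
    (L lam : ℝ) (hL : 0 < L) (hlam : L ≤ lam)
    (f : H → ℝ) (f' : H → (H →L[ℝ] ℝ))
    (hdiff : ∀ u : H, HasFDerivAt f (f' u) u)
    (hlip : ∀ u v : H, ‖f' u - f' v‖ ≤ L / 2 * ‖u - v‖)
    (ψ : H → EReal)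
    (hψbot : ∀ y, ψ y ≠ ⊥) (hψproper : ∃ y, ψ y ≠ ⊤)
    (hψconv : ∀ u v : H, ∀ t : ℝ, 0 ≤ t → t ≤ 1 →
      ψ (t • u + (1 - t) • v) ≤ (t : EReal) * ψ u + ((1 - t : ℝ) : EReal) * ψ v)
    (hψlsc : LowerSemicontinuous ψ)
    (A : H →L[ℝ] (H →L[ℝ] ℝ)) (hA : ‖A‖ ≤ L / 2)
    (hAsym : ∀ u v : H, A u v = A v u)
    (x : H) (hxdom : ψ x ≠ ⊤)
    (xplus : H)
    (hmin : ∀ y : H,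
      ((f' x (xplus - x) + 1 / 2 * A (xplus - x) (xplus - x)
          + lam / 2 * ‖xplus - x‖ ^ 2 : ℝ) : EReal) + ψ xplus ≤
      ((f' x (y - x) + 1 / 2 * A (y - x) (y - x)
          + lam / 2 * ‖y - x‖ ^ 2 : ℝ) : EReal) + ψ y) :
    ((f xplus : EReal) + ψ xplus) + ((lam / 4 * ‖xplus - x‖ ^ 2 : ℝ) : EReal) ≤
      (f x : EReal) + ψ x := by
  set s := xplus - x with hs
  set q := (ψ x).toReal with hqdef
  have hq : ψ x = (q : EReal) := (EReal.coe_toReal hxdom (hψbot x)).symm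
  -- ψ xplus is finite
  have hptop : ψ xplus ≠ ⊤ := by
    intro hT
    have h0 := hmin x
    rw [hT, EReal.add_top_of_ne_bot (EReal.coe_ne_bot _)] at h0
    rw [top_le_iff] at h0
    have h1 : ((f' x (x - x) + 1 / 2 * A (x - x) (x - x)
        + lam / 2 * ‖x - x‖ ^ 2 : ℝ) : EReal) + ψ x ≠ ⊤ := by
      rw [hq]
      rw [← EReal.coe_add]
      exact EReal.coe_ne_top _
    exact h1 h0
  set p := (ψ xplus).toReal with hpdef
  have hp : ψ xplus = (p : EReal) := (EReal.coe_toReal hptop (hψbot xplus)).symm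
  -- key per-t inequality
  have hrt : ∀ t ∈ Set.Ico (0:ℝ) 1, f' x s + p - q
      ≤ -(1 + t) * (1 / 2 * A s s + lam / 2 * ‖s‖ ^ 2) := by
    intro t ht
    have hy : t • xplus + (1 - t) • x - x = t • s := by rw [hs]; module
    have h0 := hmin (t • xplus + (1 - t) • x)
    rw [hy] at h0
    have e1 : f' x (t • s) = t * f' x s := by simp
    have e2 : A (t • s) (t • s) = t ^ 2 * (A s s) := by
      simp only [map_smul, ContinuousLinearMap.smul_apply, smul_eq_mul]; ring
    have e3 : ‖t • s‖ ^ 2 = t ^ 2 * ‖s‖ ^ 2 := by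
      rw [norm_smul, Real.norm_eq_abs, mul_pow, sq_abs]
    rw [e1, e2, e3] at h0
    have hconv := hψconv xplus x t ht.1 ht.2.le
    rw [hp, hq, ← EReal.coe_mul, ← EReal.coe_mul, ← EReal.coe_add] at hconv
    have h2 := h0.trans (add_le_add_right hconv _)
    rw [hp, ← EReal.coe_add, ← EReal.coe_add, EReal.coe_le_coe_iff] at h2
    have h1t : 0 < 1 - t := by linarith [ht.2]
    have h3 : (1 - t) * (f' x s + p - q
        + (1 + t) * (1 / 2 * A s s + lam / 2 * ‖s‖ ^ 2)) ≤ (1 - t) * 0 := by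
      rw [mul_zero]; nlinarith [h2]
    have h4 := le_of_mul_le_mul_left h3 h1t
    linarith [h4]
  -- pass to the limit t → 1⁻
  have hlim : f' x s + p - q
      ≤ -(1 + 1) * (1 / 2 * A s s + lam / 2 * ‖s‖ ^ 2) := by
    have htend : Filter.Tendsto
        (fun t : ℝ => -(1 + t) * (1 / 2 * A s s + lam / 2 * ‖s‖ ^ 2))
        (nhdsWithin 1 (Set.Iio 1))
        (nhds (-(1 + 1) * (1 / 2 * A s s + lam / 2 * ‖s‖ ^ 2))) := by
      have hc : ContinuousAt (fun t : ℝ => -(1 + t) * (1 / 2 * A s s + lam / 2 * ‖s‖ ^ 2)) 1 := by fun_prop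
      exact hc.tendsto.mono_left nhdsWithin_le_nhds
    refine ge_of_tendsto htend ?_
    filter_upwards [Ico_mem_nhdsLT_of_mem (by norm_num : (1:ℝ) ∈ Set.Ioc 0 1)] with t ht
      using hrt t ht
  -- bound on A s s
  have hAbound : |A s s| ≤ L / 2 * ‖s‖ ^ 2 := by
    have h1 : ‖A s s‖ ≤ ‖A s‖ * ‖s‖ := (A s).le_opNorm s
    have h2 : ‖A s‖ ≤ ‖A‖ * ‖s‖ := A.le_opNorm s
    have h3 : ‖A s‖ * ‖s‖ ≤ ‖A‖ * ‖s‖ * ‖s‖ :=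
      mul_le_mul_of_nonneg_right h2 (norm_nonneg s)
    rw [Real.norm_eq_abs] at h1
    nlinarith [norm_nonneg s, h1.trans h3]
  have hdesc := descent_aux L hL.le f f' hdiff hlip x xplus
  rw [← hs] at hdesc
  rw [hp, hq, ← EReal.coe_add, ← EReal.coe_add, ← EReal.coe_add, EReal.coe_le_coe_iff]
  have hσ : (0:ℝ) ≤ ‖s‖ ^ 2 := by positivity
  have habs := abs_le.mp hAbound
  nlinarith [mul_nonneg (sub_nonneg.mpr hlam) hσ, hdesc, hlim, habs.1]
end

section
/- Fix x ∈ H, a positive semidefinite bounded self-adjoint operator A on a Hilbert space H, a vector g ∈ H*, and a proper convex lower semicontinuous ψ. For λ > 0 let x₊(λ) be the unique minimizer of y ↦ ⟨g, y−x⟩ + (1/2)⟨A(y−x), y−x⟩ + (λ/2)‖y−x‖² + ψ(y). Then for all 0 < λ ≤ λ', ‖x₊(λ) − x₊(λ')‖ ≤ ((λ'−λ)/λ')·‖x − x₊(λ)‖. -/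
theorem step_sensitivity_in_lambda
    {H : Type*} [NormedAddCommGroup H] [InnerProductSpace ℝ H]
    (A : H →L[ℝ] (H →L[ℝ] ℝ))
    (hAsym : ∀ u v : H, A u v = A v u)
    (hApsd : ∀ h : H, 0 ≤ A h h)
    (g : H →L[ℝ] ℝ)
    (ψ : H → EReal)
    (hψbot : ∀ y, ψ y ≠ ⊥) (hψproper : ∃ y, ψ y ≠ ⊤)
    (hψconv : ∀ u v : H, ∀ t : ℝ, 0 ≤ t → t ≤ 1 →
      ψ (t • u + (1 - t) • v) ≤ (t : EReal) * ψ u + ((1 - t : ℝ) : EReal) * ψ v)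
    (hψlsc : LowerSemicontinuous ψ)
    (x : H) (xplus : ℝ → H)
    (hmin : ∀ lam : ℝ, 0 < lam → ∀ y : H,
      ((g (xplus lam - x) + 1 / 2 * A (xplus lam - x) (xplus lam - x)
          + lam / 2 * ‖xplus lam - x‖ ^ 2 : ℝ) : EReal) + ψ (xplus lam) ≤
      ((g (y - x) + 1 / 2 * A (y - x) (y - x)
          + lam / 2 * ‖y - x‖ ^ 2 : ℝ) : EReal) + ψ y)
    (huniq : ∀ lam : ℝ, 0 < lam → ∀ z : H,
      (∀ y : H,
        ((g (z - x) + 1 / 2 * A (z - x) (z - x)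
            + lam / 2 * ‖z - x‖ ^ 2 : ℝ) : EReal) + ψ z ≤
        ((g (y - x) + 1 / 2 * A (y - x) (y - x)
            + lam / 2 * ‖y - x‖ ^ 2 : ℝ) : EReal) + ψ y) → z = xplus lam) :
    ∀ lam lam' : ℝ, 0 < lam → lam ≤ lam' →
      ‖xplus lam - xplus lam'‖ ≤ (lam' - lam) / lam' * ‖x - xplus lam‖ := by
  obtain ⟨y₀, hy₀⟩ := hψproper
  obtain ⟨s₀, hs₀⟩ : ∃ s₀ : ℝ, ψ y₀ = (s₀ : EReal) :=
    ⟨(ψ y₀).toReal, (EReal.coe_toReal hy₀ (hψbot y₀)).symm⟩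
  -- ψ is finite (real-valued) at each minimizer
  have hfin : ∀ p : ℝ, 0 < p → ∃ s : ℝ, ψ (xplus p) = (s : EReal) := by
    intro p hp
    have h1 := hmin p hp y₀
    rw [hs₀, ← EReal.coe_add] at h1
    have hne : ψ (xplus p) ≠ ⊤ := by
      intro htop
      rw [htop, EReal.add_top_of_ne_bot (EReal.coe_ne_bot _)] at h1
      exact (EReal.coe_ne_top _) (top_le_iff.mp h1)
    exact ⟨(ψ (xplus p)).toReal, (EReal.coe_toReal hne (hψbot _)).symm⟩
  -- key strong-convexity inequality at the minimizer
  have key : ∀ p : ℝ, 0 < p → ∀ w : H, ∀ su sw : ℝ,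
      ψ (xplus p) = (su : EReal) → ψ w = (sw : EReal) →
      p / 2 * ‖xplus p - w‖ ^ 2 ≤
        (g (w - x) + 1 / 2 * A (w - x) (w - x) + p / 2 * ‖w - x‖ ^ 2 + sw)
        - (g (xplus p - x) + 1 / 2 * A (xplus p - x) (xplus p - x)
            + p / 2 * ‖xplus p - x‖ ^ 2 + su) := by
    intro p hp w su sw hsu hsw
    set u := xplus p with hu
    set h : H := u - x with hh
    set k : H := w - x with hk
    have hdiff : u - w = h - k := by rw [hh, hk]; abel
    have pert : ∀ t : ℝ, 0 < t → t < 1 →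
        (1 - t) * (p / 2 * ‖u - w‖ ^ 2) ≤
        (g k + 1 / 2 * A k k + p / 2 * ‖k‖ ^ 2 + sw)
        - (g h + 1 / 2 * A h h + p / 2 * ‖h‖ ^ 2 + su) := by
      intro t ht0 ht1
      have hz : (t • w + (1 - t) • u) - x = t • k + (1 - t) • h := by
        rw [hk, hh]; module
      have Hm := hmin p hp (t • w + (1 - t) • u)
      rw [hz, ← hu, ← hh, hsu] at Hm
      have Hc := hψconv w u t ht0.le ht1.le
      rw [hsw, hsu, ← EReal.coe_mul, ← EReal.coe_mul, ← EReal.coe_add] at Hc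
      have H2 := Hm.trans (add_le_add le_rfl Hc)
      rw [← EReal.coe_add, ← EReal.coe_add] at H2
      have H3 := EReal.coe_le_coe_iff.mp H2
      -- expand the quadratic terms
      have e1 : g (t • k + (1 - t) • h) = t * g k + (1 - t) * g h := by
        simp only [map_add, map_smul, smul_eq_mul]
      have e2 : A (t • k + (1 - t) • h) (t • k + (1 - t) • h)
          = t * (t * A k k + (1 - t) * A k h) + (1 - t) * (t * A h k + (1 - t) * A h h) := by
        simp only [map_add, map_smul, ContinuousLinearMap.add_apply,
          ContinuousLinearMap.smul_apply, smul_eq_mul]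
        ring
      have e3 : ‖t • k + (1 - t) • h‖ ^ 2
          = t ^ 2 * ‖k‖ ^ 2 + 2 * t * (1 - t) * (inner ℝ k h : ℝ) + (1 - t) ^ 2 * ‖h‖ ^ 2 := by
        have e3' : (inner ℝ (t • k + (1 - t) • h) (t • k + (1 - t) • h) : ℝ)
            = t ^ 2 * (inner ℝ k k : ℝ) + 2 * t * (1 - t) * (inner ℝ k h : ℝ)
              + (1 - t) ^ 2 * (inner ℝ h h : ℝ) := by
          simp only [inner_add_left, inner_add_right, real_inner_smul_left,
            real_inner_smul_right]
          rw [real_inner_comm h k]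
          ring
        rw [← real_inner_self_eq_norm_sq, e3', real_inner_self_eq_norm_sq,
          real_inner_self_eq_norm_sq]
      have e4 : A k h = A h k := hAsym k h
      rw [e1, e2, e3, e4] at H3
      have psd : 0 ≤ A h h - 2 * A h k + A k k := by
        have h5 := hApsd (h - k)
        have ee : A (h - k) (h - k) = A h h - 2 * A h k + A k k := by
          simp only [map_sub, ContinuousLinearMap.sub_apply, hAsym k h]
          try ring
        linarith [ee ▸ h5]
      have e5 : ‖u - w‖ ^ 2 = ‖h‖ ^ 2 - 2 * (inner ℝ k h : ℝ) + ‖k‖ ^ 2 := by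
        rw [hdiff, norm_sub_sq_real, real_inner_comm]
        try ring
      set gk := g k
      set gh := g h
      set akk := A k k
      set ahk := A h k
      set ahh := A h h
      set nk := ‖k‖ ^ 2
      set nh := ‖h‖ ^ 2
      set ikh := (inner ℝ k h : ℝ)
      have hid : t * (((gk + 1 / 2 * akk + p / 2 * nk + sw)
              - (gh + 1 / 2 * ahh + p / 2 * nh + su))
            - p / 2 * (1 - t) * (nh - 2 * ikh + nk)
            - 1 / 2 * (1 - t) * (ahh - 2 * ahk + akk))
          = (t * gk + (1 - t) * gh
              + 1 / 2 * (t * (t * akk + (1 - t) * ahk) + (1 - t) * (t * ahk + (1 - t) * ahh))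
              + p / 2 * (t ^ 2 * nk + 2 * t * (1 - t) * ikh + (1 - t) ^ 2 * nh)
              + (t * sw + (1 - t) * su))
            - (gh + 1 / 2 * ahh + p / 2 * nh + su) := by ring
      have hX : 0 ≤ (((gk + 1 / 2 * akk + p / 2 * nk + sw)
              - (gh + 1 / 2 * ahh + p / 2 * nh + su))
            - p / 2 * (1 - t) * (nh - 2 * ikh + nk)
            - 1 / 2 * (1 - t) * (ahh - 2 * ahk + akk)) := by
        have h9 : t * 0 ≤ t * (((gk + 1 / 2 * akk + p / 2 * nk + sw)
              - (gh + 1 / 2 * ahh + p / 2 * nh + su))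
            - p / 2 * (1 - t) * (nh - 2 * ikh + nk)
            - 1 / 2 * (1 - t) * (ahh - 2 * ahk + akk)) := by
          rw [mul_zero, hid]
          linarith [H3]
        exact le_of_mul_le_mul_left h9 ht0
      have h1t : (0:ℝ) ≤ 1 - t := by linarith
      have hpsd' : 0 ≤ 1 / 2 * (1 - t) * (ahh - 2 * ahk + akk) :=
        mul_nonneg (mul_nonneg (by norm_num) h1t) psd
      rw [e5]
      linarith [hX, hpsd']
    -- take t → 0
    set c := p / 2 * ‖u - w‖ ^ 2 with hc
    set D := (g k + 1 / 2 * A k k + p / 2 * ‖k‖ ^ 2 + sw)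
        - (g h + 1 / 2 * A h h + p / 2 * ‖h‖ ^ 2 + su) with hD
    clear_value c D
    by_contra hlt
    push_neg at hlt
    have hhalf : (1 - (1:ℝ)/2) * c ≤ D := pert (1/2) (by norm_num) (by norm_num)
    have hcpos : 0 < c := by linarith
    have hcne : c ≠ 0 := ne_of_gt hcpos
    set t0 := (c - D) / (2 * c) with ht0def
    clear_value t0
    have ht00 : 0 < t0 := by
      rw [ht0def]
      exact div_pos (by linarith) (by linarith)
    have ht01 : t0 < 1 := by
      rw [ht0def, div_lt_one (by linarith)]
      linarith
    have hpt := pert t0 ht00 ht01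
    have hct0 : c * t0 = (c - D) / 2 := by
      rw [ht0def]
      field_simp
    linarith [hpt, hct0]
  -- apply key at both minimizers
  intro lam lam' hlam hle
  have hlam' : 0 < lam' := lt_of_lt_of_le hlam hle
  obtain ⟨su, hsu⟩ := hfin lam hlam
  obtain ⟨sv, hsv⟩ := hfin lam' hlam'
  have k1 := key lam hlam (xplus lam') su sv hsu hsv
  have k2 := key lam' hlam' (xplus lam) sv su hsv hsu
  rw [norm_sub_rev (xplus lam') (xplus lam)] at k2
  set u := xplus lam
  set v := xplus lam'
  set d := ‖u - v‖ with hd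
  have hd0 : 0 ≤ d := norm_nonneg _
  have hvx : v - x = (u - x) - (u - v) := by abel
  have e6 : ‖v - x‖ ^ 2 = ‖u - x‖ ^ 2 - 2 * (inner ℝ (u - x) (u - v) : ℝ) + d ^ 2 := by
    rw [hvx, norm_sub_sq_real]
  have hCS : (inner ℝ (u - x) (u - v) : ℝ) ≤ ‖u - x‖ * d := real_inner_le_norm _ _
  have h8 : (lam' - lam) * (inner ℝ (u - x) (u - v) : ℝ) ≤ (lam' - lam) * (‖u - x‖ * d) :=
    mul_le_mul_of_nonneg_left hCS (sub_nonneg.mpr hle)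
  rw [e6] at k1 k2
  have hmain : lam' * d ^ 2 ≤ (lam' - lam) * (‖u - x‖ * d) := by linarith [k1, k2, h8]
  have hxustep : ‖x - u‖ = ‖u - x‖ := norm_sub_rev x u
  rw [hxustep, div_mul_eq_mul_div, le_div_iff₀ hlam']
  rcases eq_or_lt_of_le hd0 with heq | hdpos
  · rw [← heq, zero_mul]
    exact mul_nonneg (sub_nonneg.mpr hle) (norm_nonneg _)
  · have h7 : d * lam' * d ≤ (lam' - lam) * ‖u - x‖ * d := by linarith [hmain]
    exact le_of_mul_le_mul_right h7 hdpos
end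

section
/- Let F: H → ℝ be bounded below by F* and satisfy the Polyak–Łojasiewicz inequality (1/(2μ)) dist(0, ∂F(x))² ≥ F(x) − F* for μ > 0. If F(x_k) − F(x_{k+1}) ≥ (1/(16 λ_k)) dist(0, ∂F(x_{k+1}))² with 0 < λ_k ≤ λ̄, then F(x_{k+1}) − F* ≤ (1 − μ/(μ + 8λ_k)) (F(x_k) − F*). -/
theorem PL_linear_decrease_step
    {H : Type*} [NormedAddCommGroup H] [InnerProductSpace ℝ H]
    (F : H → ℝ) (Fstar : ℝ) (hlow : ∀ x, Fstar ≤ F x)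
    (subdiff : H → Set (H →L[ℝ] ℝ))
    (mu : ℝ) (hmu : 0 < mu)
    (hPL : ∀ x : H,
      F x - Fstar ≤ 1 / (2 * mu) * (Metric.infDist 0 (subdiff x)) ^ 2)
    (x : ℕ → H) (lam : ℕ → ℝ) (lamBar : ℝ)
    (hlampos : ∀ k, 0 < lam k) (hlamb : ∀ k, lam k ≤ lamBar)
    (hdec : ∀ k : ℕ, F (x k) - F (x (k + 1)) ≥
      1 / (16 * lam k) * (Metric.infDist 0 (subdiff (x (k + 1)))) ^ 2) :
    ∀ k : ℕ, F (x (k + 1)) - Fstar ≤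
      (1 - mu / (mu + 8 * lam k)) * (F (x k) - Fstar) := by
  intro k
  have hl := hlampos k
  have hPL1 := hPL (x (k + 1))
  have hd := hdec k
  set d := Metric.infDist 0 (subdiff (x (k + 1))) with hdd
  -- d^2 ≥ 2μ (F(x_{k+1}) - F*)
  have h1 : 2 * mu * (F (x (k + 1)) - Fstar) ≤ d ^ 2 := by
    have h2mu : (0:ℝ) < 2 * mu := by linarith
    have := mul_le_mul_of_nonneg_left hPL1 (le_of_lt h2mu)
    calc 2 * mu * (F (x (k + 1)) - Fstar) ≤ 2 * mu * (1 / (2 * mu) * d ^ 2) := this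
      _ = d ^ 2 := by field_simp
  have h2 : 1 / (16 * lam k) * (2 * mu * (F (x (k + 1)) - Fstar)) ≤
      F (x k) - F (x (k + 1)) := by
    have h16 : (0:ℝ) < 1 / (16 * lam k) := by positivity
    have := mul_le_mul_of_nonneg_left h1 (le_of_lt h16)
    linarith
  have hpos : (0:ℝ) < mu + 8 * lam k := by linarith
  have h2' : 2 * mu * (F (x (k + 1)) - Fstar) ≤ 16 * lam k * (F (x k) - F (x (k + 1))) := by
    rw [div_mul_eq_mul_div, one_mul, div_le_iff₀ (by positivity : (0:ℝ) < 16 * lam k)] at h2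
    linarith [h2]
  have heq : (1 - mu / (mu + 8 * lam k)) = 8 * lam k / (mu + 8 * lam k) := by
    field_simp
    ring
  rw [heq, div_mul_eq_mul_div, le_div_iff₀ hpos]
  nlinarith [hlow (x k), hlow (x (k + 1))]
end
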